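/- Let α ∈ ℂ with Re α ≥ 0. For t ≥ 0 define the operator U_t on L²((0,∞)) by (U_t f)(x) = x^α (x+t)^{−α} f(x+t), where complex powers of positive reals are exp(α log x). Then: (i) for every f ∈ L²((0,∞)), U_t f ∈ L²((0,∞)) with ‖U_t f‖ ≤ ‖f‖ (each U_t is a linear contraction); (ii) U_t U_s = U_{t+s} for all s,t ≥ 0 and U_0 is the identity; (iii) for every f ∈ L²((0,∞)) the map t ↦ U_t f is continuous from [0,∞) to L²((0,∞)). Hence (U_t)_{t≥0} is a strongly continuous semigroup of contractions, with generator the maximal realization of ∂_x − α/x. -/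

import Mathlib

open MeasureTheory

/-- The translation-dilation family `(U_t f)(x) = x^α (x+t)^{−α} f(x+t)` on the half-line. -/
noncomputable def halfLineSemigroup (α : ℂ) (t : ℝ) (f : ℝ → ℂ) : ℝ → ℂ :=
  fun x => (x : ℂ) ^ α * ((x + t : ℝ) : ℂ) ^ (-α) * f (x + t)

section HlsAux

open Set Filter Complex
open scoped ENNReal Topology

lemma hls_measurable_cpow_const (w : ℂ) : Measurable fun z : ℂ => z ^ w := by
  simp only [Complex.cpow_def]
  exact Measurable.ite (by simp) measurable_const
    (Complex.measurable_exp.comp (Complex.measurable_log.mul_const w))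

lemma hls_m_norm_le {α : ℂ} (hα : 0 ≤ α.re) {t x : ℝ} (ht : 0 ≤ t) (hx : 0 < x) :
    ‖(x : ℂ) ^ α * ((x + t : ℝ) : ℂ) ^ (-α)‖ ≤ 1 := by
  have hxt : (0:ℝ) < x + t := by linarith
  rw [norm_mul,
    Complex.norm_cpow_eq_rpow_re_of_pos hx, Complex.norm_cpow_eq_rpow_re_of_pos hxt,
    Complex.neg_re, Real.rpow_neg hxt.le]
  have h1 : x ^ α.re ≤ (x + t) ^ α.re := Real.rpow_le_rpow hx.le (by linarith) hα
  have h2 : (0:ℝ) < (x + t) ^ α.re := Real.rpow_pos_of_pos hxt _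
  rw [← div_eq_mul_inv, div_le_one h2]
  exact h1

lemma hls_mp (t : ℝ) : MeasurePreserving (fun x : ℝ => x + t)
    (volume.restrict (Set.Ioi 0)) (volume.restrict (Set.Ioi t)) := by
  refine ⟨measurable_add_const t, ?_⟩
  have h1 : (fun x : ℝ => x + t) ⁻¹' (Set.Ioi t) = Set.Ioi 0 := by
    ext x; simp
  rw [← h1, ← Measure.restrict_map (measurable_add_const t) measurableSet_Ioi,
    (measurePreserving_add_right volume t).map_eq]

lemma hls_aesm {α : ℂ} (t : ℝ) (ht : 0 ≤ t) {f : ℝ → ℂ}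
    (hf : AEStronglyMeasurable f (volume.restrict (Set.Ioi 0))) :
    AEStronglyMeasurable (halfLineSemigroup α t f) (volume.restrict (Set.Ioi 0)) := by
  have hc1 : ContinuousOn (fun x : ℝ => (x : ℂ) ^ α) (Set.Ioi 0) := fun x hx =>
    (ContinuousAt.cpow (by fun_prop) continuousAt_const
      (Complex.ofReal_mem_slitPlane.2 hx)).continuousWithinAt
  have hc2 : ContinuousOn (fun x : ℝ => ((x + t : ℝ) : ℂ) ^ (-α)) (Set.Ioi 0) := by
    intro x hx
    have hxt : (0:ℝ) < x + t := by simp only [Set.mem_Ioi] at hx; linarith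
    have hb : ContinuousAt (fun x : ℝ => ((x + t : ℝ) : ℂ)) x := by fun_prop
    exact (hb.cpow continuousAt_const
      (Complex.ofReal_mem_slitPlane.2 hxt)).continuousWithinAt
  have hshift : AEStronglyMeasurable (fun x => f (x + t)) (volume.restrict (Set.Ioi 0)) :=
    (hf.mono_measure (Measure.restrict_mono (Set.Ioi_subset_Ioi ht) le_rfl)).comp_measurePreserving
      (hls_mp t)
  exact ((hc1.aestronglyMeasurable measurableSet_Ioi).mul
    (hc2.aestronglyMeasurable measurableSet_Ioi)).mul hshift

lemma hls_shift_ae_eq {f f' : ℝ → ℂ} (h : f =ᵐ[volume.restrict (Set.Ioi 0)] f')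
    {t : ℝ} (ht : 0 ≤ t) :
    (fun x => f (x + t)) =ᵐ[volume.restrict (Set.Ioi 0)] fun x => f' (x + t) := by
  rw [Filter.EventuallyEq, ae_iff, Measure.restrict_apply' measurableSet_Ioi] at h ⊢
  have hsub : {x | ¬ f (x + t) = f' (x + t)} ∩ Set.Ioi 0 ⊆
      (fun x : ℝ => x + t) ⁻¹' ({x | ¬ f x = f' x} ∩ Set.Ioi 0) := fun x hx =>
    ⟨hx.1, by have := hx.2; simp only [Set.mem_Ioi, Set.mem_preimage] at this ⊢; linarith⟩
  refine measure_mono_null hsub ?_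
  rw [measure_preimage_add_right]
  exact h

lemma hls_translation_tendsto {g : ℝ → ℂ} (hg : MemLp g 2 (volume : Measure ℝ)) (t₀ : ℝ) :
    Filter.Tendsto
      (fun t : ℝ => eLpNorm (fun x => g (x + t) - g (x + t₀)) 2 (volume : Measure ℝ))
      (𝓝 t₀) (𝓝 0) := by
  haveI : Fact ((1:ℝ≥0∞) ≤ 2) := ⟨one_le_two⟩
  set G : Lp ℂ 2 (volume : Measure ℝ) := hg.toLp g with hG
  have hτmp : ∀ t : ℝ, MeasurePreserving (fun x : ℝ => x + t) volume volume := fun t =>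
    measurePreserving_add_right volume t
  set τ : ℝ → C(ℝ, ℝ) := fun t => ⟨fun x => x + t, by fun_prop⟩ with hτ
  have hτcont : Continuous τ := by
    refine ContinuousMap.continuous_of_continuous_uncurry _ ?_
    exact continuous_snd.add continuous_fst
  set T : ℝ → Lp ℂ 2 (volume : Measure ℝ) := fun t =>
    Lp.compMeasurePreserving (τ t) (hτmp t) G with hT
  have hTcont : Filter.Tendsto T (𝓝 t₀) (𝓝 (T t₀)) :=
    Filter.Tendsto.compMeasurePreservingLp tendsto_const_nhds (hτcont.tendsto t₀)
      (fun t => hτmp t) (hτmp t₀) (by norm_num)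
  have hcoe : ∀ t : ℝ, (T t : ℝ → ℂ) =ᵐ[volume] fun x => g (x + t) := by
    intro t
    refine (Lp.coeFn_compMeasurePreserving G (hτmp t)).trans ?_
    exact (hτmp t).quasiMeasurePreserving.ae_eq_comp (hg.coeFn_toLp)
  have hAeq : ∀ t : ℝ, eLpNorm (fun x => g (x + t) - g (x + t₀)) 2 (volume : Measure ℝ)
      = ENNReal.ofReal ‖T t - T t₀‖ := by
    intro t
    have h1 : (fun x => g (x + t) - g (x + t₀)) =ᵐ[volume] (T t - T t₀ : Lp ℂ 2 _) := by
      filter_upwards [hcoe t, hcoe t₀, Lp.coeFn_sub (T t) (T t₀)] with x h1 h2 h3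
      rw [h3, Pi.sub_apply, h1, h2]
    rw [eLpNorm_congr_ae h1, Lp.norm_def,
      ENNReal.ofReal_toReal (Lp.eLpNorm_ne_top _)]
  have hnorm : Filter.Tendsto (fun t => ‖T t - T t₀‖) (𝓝 t₀) (𝓝 0) := by
    have := (hTcont.sub (tendsto_const_nhds (x := T t₀))).norm
    simpa using this
  have := (ENNReal.continuous_ofReal.tendsto 0).comp hnorm
  simp only [ENNReal.ofReal_zero] at this
  exact this.congr fun t => (hAeq t).symm

lemma hls_mult_tendsto (α : ℂ) (hα : 0 ≤ α.re) {g : ℝ → ℂ} (hgm : StronglyMeasurable g)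
    (hg : MemLp g 2 (volume : Measure ℝ)) (t₀ : ℝ) (ht₀ : 0 ≤ t₀) :
    Filter.Tendsto (fun t : ℝ => eLpNorm (fun x : ℝ =>
        ((x:ℂ)^α * ((x+t:ℝ):ℂ)^(-α) - (x:ℂ)^α * ((x+t₀:ℝ):ℂ)^(-α)) * g (x+t₀)) 2
      (volume.restrict (Set.Ioi 0))) (𝓝[Set.Ici 0] t₀) (𝓝 0) := by
  set μI := volume.restrict (Set.Ioi (0:ℝ)) with hμI
  set m : ℝ → ℝ → ℂ := fun t x => (x:ℂ)^α * ((x+t:ℝ):ℂ)^(-α) with hm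
  have hmmeas : ∀ t, Measurable (m t) := fun t =>
    ((hls_measurable_cpow_const α).comp Complex.measurable_ofReal).mul
      ((hls_measurable_cpow_const (-α)).comp
        (Complex.measurable_ofReal.comp (measurable_add_const t)))
  set F : ℝ → ℝ → ℝ≥0∞ := fun t x => (‖(m t x - m t₀ x) * g (x+t₀)‖₊ : ℝ≥0∞) ^ (2:ℝ) with hF
  have hgm' : Measurable fun x : ℝ => g (x + t₀) :=
    hgm.measurable.comp (measurable_add_const t₀)
  have hFmeas : ∀ t, Measurable (F t) := fun t =>
    (ENNReal.continuous_rpow_const.measurable).comp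
      ((((hmmeas t).sub (hmmeas t₀)).mul hgm').nnnorm.coe_nnreal_ennreal)
  have h4 : (2:ℝ≥0∞) ^ (2:ℝ) = 4 := by
    rw [show (2:ℝ) = ((2:ℕ):ℝ) by norm_num, ENNReal.rpow_natCast]; norm_num
  set bound : ℝ → ℝ≥0∞ := fun x => 4 * (‖g (x+t₀)‖₊ : ℝ≥0∞) ^ (2:ℝ) with hbound
  have h_bound : ∀ᶠ t in 𝓝[Set.Ici 0] t₀, ∀ᵐ x ∂μI, F t x ≤ bound x := by
    filter_upwards [self_mem_nhdsWithin] with t ht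
    refine (ae_restrict_iff' measurableSet_Ioi).2 (Filter.Eventually.of_forall fun x hx => ?_)
    simp only [Set.mem_Ioi] at hx
    have hnorm : ‖(m t x - m t₀ x) * g (x+t₀)‖ ≤ 2 * ‖g (x+t₀)‖ := by
      rw [norm_mul]
      have h1 := hls_m_norm_le hα ht hx
      have h2 := hls_m_norm_le hα ht₀ hx
      have : ‖m t x - m t₀ x‖ ≤ 2 := by
        calc ‖m t x - m t₀ x‖ ≤ ‖m t x‖ + ‖m t₀ x‖ := norm_sub_le _ _
          _ ≤ 2 := by simp only [hm] at *; linarith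
      exact mul_le_mul_of_nonneg_right this (norm_nonneg _)
    have hc : (‖(m t x - m t₀ x) * g (x+t₀)‖₊ : ℝ≥0∞) ≤ 2 * (‖g (x+t₀)‖₊ : ℝ≥0∞) := by
      rw [← enorm_eq_nnnorm, ← enorm_eq_nnnorm, ← ofReal_norm, ← ofReal_norm,
        show (2 : ℝ≥0∞) = ENNReal.ofReal (2:ℝ) by norm_num,
        ← ENNReal.ofReal_mul (by norm_num)]
      exact ENNReal.ofReal_le_ofReal hnorm
    calc F t x ≤ (2 * (‖g (x+t₀)‖₊ : ℝ≥0∞)) ^ (2:ℝ) :=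
          ENNReal.rpow_le_rpow hc (by norm_num)
      _ = bound x := by
          rw [hbound, ENNReal.mul_rpow_of_nonneg _ _ (by norm_num : (0:ℝ) ≤ 2), h4]
  have h_fin : ∫⁻ x, bound x ∂μI ≠ ⊤ := by
    rw [hbound, lintegral_const_mul' 4 _ (by norm_num)]
    refine ENNReal.mul_ne_top (by norm_num) ?_
    have hle : ∫⁻ x, (‖g (x+t₀)‖₊ : ℝ≥0∞) ^ (2:ℝ) ∂μI ≤
        ∫⁻ x, (‖g (x+t₀)‖₊ : ℝ≥0∞) ^ (2:ℝ) ∂(volume : Measure ℝ) :=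
      lintegral_mono' Measure.restrict_le_self le_rfl
    have heq : ∫⁻ x, (‖g (x+t₀)‖₊ : ℝ≥0∞) ^ (2:ℝ) ∂(volume : Measure ℝ) =
        ∫⁻ x, (‖g x‖₊ : ℝ≥0∞) ^ (2:ℝ) ∂(volume : Measure ℝ) :=
      lintegral_add_right_eq_self (fun x => (‖g x‖₊ : ℝ≥0∞) ^ (2:ℝ)) t₀
    have hfin : ∫⁻ x, (‖g x‖₊ : ℝ≥0∞) ^ (2:ℝ) ∂(volume : Measure ℝ) < ⊤ := by
      have := lintegral_rpow_enorm_lt_top_of_eLpNorm_lt_top (f := g) (p := 2)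
        (by norm_num) (by norm_num) hg.2
      simpa [enorm_eq_nnnorm] using this
    exact (lt_of_le_of_lt (hle.trans_eq heq) hfin).ne
  have h_lim : ∀ᵐ x ∂μI, Filter.Tendsto (fun t => F t x) (𝓝[Set.Ici 0] t₀) (𝓝 0) := by
    refine (ae_restrict_iff' measurableSet_Ioi).2 (Filter.Eventually.of_forall fun x hx => ?_)
    simp only [Set.mem_Ioi] at hx
    have hxt : (0:ℝ) < x + t₀ := by linarith
    have hb : Filter.Tendsto (fun t : ℝ => ((x+t:ℝ):ℂ)) (𝓝 t₀) (𝓝 ((x+t₀:ℝ):ℂ)) := by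
      have : Continuous (fun t : ℝ => ((x+t:ℝ):ℂ)) := by fun_prop
      exact this.tendsto t₀
    have hmt : Filter.Tendsto (fun t => m t x) (𝓝 t₀) (𝓝 (m t₀ x)) :=
      Filter.Tendsto.const_mul _ (hb.cpow tendsto_const_nhds
        (Complex.ofReal_mem_slitPlane.2 hxt))
    have hu : Filter.Tendsto (fun t => (m t x - m t₀ x) * g (x+t₀)) (𝓝 t₀) (𝓝 0) := by
      have := (hmt.sub (tendsto_const_nhds (x := m t₀ x))).mul_const (g (x+t₀))
      simpa using this
    have h1 : Filter.Tendsto (fun t => (‖(m t x - m t₀ x) * g (x+t₀)‖₊ : ℝ≥0∞)) (𝓝 t₀)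
        (𝓝 0) := by
      have := ((ENNReal.continuous_coe.comp continuous_nnnorm).tendsto (0:ℂ)).comp hu
      simp only [Function.comp_def, nnnorm_zero, ENNReal.coe_zero] at this
      exact this
    have h2 := ((ENNReal.continuous_rpow_const (y := (2:ℝ))).tendsto (0:ℝ≥0∞)).comp h1
    rw [ENNReal.zero_rpow_of_pos (by norm_num : (0:ℝ) < 2)] at h2
    exact h2.mono_left nhdsWithin_le_nhds
  have hI : Filter.Tendsto (fun t => ∫⁻ x, F t x ∂μI) (𝓝[Set.Ici 0] t₀) (𝓝 0) := by
    have := tendsto_lintegral_filter_of_dominated_convergence (μ := μI)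
      (F := F) (f := fun _ => 0) bound (Filter.Eventually.of_forall hFmeas) h_bound h_fin h_lim
    simpa using this
  have heq : ∀ t : ℝ, eLpNorm (fun x => (m t x - m t₀ x) * g (x+t₀)) 2 μI
      = (∫⁻ x, F t x ∂μI) ^ (1/2 : ℝ) := by
    intro t
    rw [eLpNorm_eq_lintegral_rpow_enorm_toReal (by norm_num) (by norm_num)]
    rw [show ((2:ℝ≥0∞)).toReal = (2:ℝ) by norm_num]
    rfl
  have hfinal := ((ENNReal.continuous_rpow_const (y := (1/2:ℝ))).tendsto (0:ℝ≥0∞)).comp hI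
  rw [ENNReal.zero_rpow_of_pos (by norm_num : (0:ℝ) < 1/2)] at hfinal
  refine Filter.Tendsto.congr (fun t => ?_) hfinal
  simp only [Function.comp]
  exact (heq t).symm

end HlsAux

/-- For `Re α ≥ 0`, the family `U_t` is a strongly continuous semigroup of contractions
on `L²((0,∞))`: each `U_t` is a linear contraction, `U_t U_s = U_{t+s}`, `U_0 = 1`, and
`t ↦ U_t f` is continuous from `[0,∞)` to `L²`. -/
theorem halfLineSemigroup_contraction_semigroup (α : ℂ) (hα : 0 ≤ α.re) :
    (∀ t : ℝ, 0 ≤ t → ∀ f : ℝ → ℂ,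
      MemLp f 2 (volume.restrict (Set.Ioi 0)) →
        MemLp (halfLineSemigroup α t f) 2 (volume.restrict (Set.Ioi 0)) ∧
          eLpNorm (halfLineSemigroup α t f) 2 (volume.restrict (Set.Ioi 0)) ≤
            eLpNorm f 2 (volume.restrict (Set.Ioi 0))) ∧
    (∀ t : ℝ, ∀ c : ℂ, ∀ f g : ℝ → ℂ, ∀ x : ℝ,
      halfLineSemigroup α t (fun y => c * f y + g y) x =
        c * halfLineSemigroup α t f x + halfLineSemigroup α t g x) ∧
    (∀ s t : ℝ, 0 ≤ s → 0 ≤ t → ∀ f : ℝ → ℂ, ∀ x ∈ Set.Ioi (0 : ℝ),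
      halfLineSemigroup α t (halfLineSemigroup α s f) x = halfLineSemigroup α (t + s) f x) ∧
    (∀ f : ℝ → ℂ, ∀ x ∈ Set.Ioi (0 : ℝ), halfLineSemigroup α 0 f x = f x) ∧
    (∀ f : ℝ → ℂ, MemLp f 2 (volume.restrict (Set.Ioi 0)) → ∀ t₀ : ℝ, 0 ≤ t₀ →
      Filter.Tendsto
        (fun t => eLpNorm (fun x => halfLineSemigroup α t f x - halfLineSemigroup α t₀ f x) 2
          (volume.restrict (Set.Ioi 0)))
        (nhdsWithin t₀ (Set.Ici 0)) (nhds 0)) := by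
  open Set Filter Complex in
  open scoped ENNReal Topology in
  refine ⟨?_, ?_, ?_, ?_, ?_⟩
  · -- contraction
    intro t ht f hf
    have hmono := Measure.restrict_mono (Set.Ioi_subset_Ioi ht) (le_refl (volume : Measure ℝ))
    have hfshift : MemLp (fun x => f (x + t)) 2 (volume.restrict (Set.Ioi 0)) :=
      (hf.mono_measure hmono).comp_measurePreserving (hls_mp t)
    have hae : ∀ᵐ x ∂(volume.restrict (Set.Ioi (0:ℝ))),
        ‖halfLineSemigroup α t f x‖ ≤ ‖f (x + t)‖ := by
      refine (ae_restrict_iff' measurableSet_Ioi).2 (Filter.Eventually.of_forall fun x hx => ?_)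
      simp only [halfLineSemigroup, Set.mem_Ioi] at hx ⊢
      rw [norm_mul]
      calc ‖(x : ℂ) ^ α * ((x + t : ℝ) : ℂ) ^ (-α)‖ * ‖f (x + t)‖
          ≤ 1 * ‖f (x + t)‖ :=
            mul_le_mul_of_nonneg_right (hls_m_norm_le hα ht hx) (norm_nonneg _)
        _ = ‖f (x + t)‖ := one_mul _
    refine ⟨hfshift.of_le (hls_aesm t ht hf.1) hae, ?_⟩
    calc eLpNorm (halfLineSemigroup α t f) 2 (volume.restrict (Set.Ioi 0))
        ≤ eLpNorm (fun x => f (x + t)) 2 (volume.restrict (Set.Ioi 0)) := eLpNorm_mono_ae hae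
      _ = eLpNorm f 2 (volume.restrict (Set.Ioi t)) :=
          eLpNorm_comp_measurePreserving (hf.1.mono_measure hmono) (hls_mp t)
      _ ≤ eLpNorm f 2 (volume.restrict (Set.Ioi 0)) := eLpNorm_mono_measure f hmono
  · -- linearity
    intro t c f g x
    simp only [halfLineSemigroup]
    ring
  · -- semigroup law
    intro s t hs ht f x hx
    simp only [halfLineSemigroup, Set.mem_Ioi] at hx ⊢
    have hxt : (((x + t : ℝ)) : ℂ) ≠ 0 :=
      Complex.ofReal_ne_zero.2 (ne_of_gt (by linarith : (0:ℝ) < x + t))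
    have hc : ((x + t : ℝ) : ℂ) ^ (-α) * ((x + t : ℝ) : ℂ) ^ α = 1 := by
      rw [Complex.cpow_neg]
      exact inv_mul_cancel₀ (fun h => hxt ((Complex.cpow_eq_zero_iff _ _).1 h).1)
    rw [show x + (t + s) = x + t + s by ring]
    calc (x : ℂ) ^ α * ((x + t : ℝ) : ℂ) ^ (-α) *
          (((x + t : ℝ)) ^ α * (((x + t + s : ℝ)) : ℂ) ^ (-α) * f (x + t + s))
        = (x : ℂ) ^ α * (((x + t : ℝ) : ℂ) ^ (-α) * ((x + t : ℝ)) ^ α) *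
          ((((x + t + s : ℝ)) : ℂ) ^ (-α) * f (x + t + s)) := by ring
      _ = _ := by rw [hc]; ring
  · -- identity
    intro f x hx
    simp only [halfLineSemigroup, Set.mem_Ioi, add_zero] at hx ⊢
    have hxc : (x : ℂ) ≠ 0 := Complex.ofReal_ne_zero.2 (ne_of_gt hx)
    rw [Complex.cpow_neg,
      mul_inv_cancel₀ (fun h => hxc ((Complex.cpow_eq_zero_iff _ _).1 h).1), one_mul]
  · -- strong continuity
    intro f hf t₀ ht₀
    set μI := volume.restrict (Set.Ioi (0:ℝ)) with hμI
    set f' := hf.1.mk f with hf'def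
    have hff' : f =ᵐ[μI] f' := hf.1.ae_eq_mk
    have hf'sm : StronglyMeasurable f' := hf.1.stronglyMeasurable_mk
    have hf' : MemLp f' 2 μI := hf.ae_eq hff'
    have hcong : ∀ t : ℝ, 0 ≤ t →
        halfLineSemigroup α t f =ᵐ[μI] halfLineSemigroup α t f' := by
      intro t ht
      filter_upwards [hls_shift_ae_eq hff' ht] with x hx
      simp only [halfLineSemigroup, hx]
    have hev : (fun t => eLpNorm
          (fun x => halfLineSemigroup α t f' x - halfLineSemigroup α t₀ f' x) 2 μI)
        =ᶠ[𝓝[Set.Ici 0] t₀] (fun t => eLpNorm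
          (fun x => halfLineSemigroup α t f x - halfLineSemigroup α t₀ f x) 2 μI) := by
      filter_upwards [self_mem_nhdsWithin] with t ht
      exact eLpNorm_congr_ae (((hcong t ht).sub (hcong t₀ ht₀)).symm)
    refine Filter.Tendsto.congr' hev ?_
    set g := (Set.Ioi (0:ℝ)).indicator f' with hgdef
    have hgsm : StronglyMeasurable g := hf'sm.indicator measurableSet_Ioi
    have hg : MemLp g 2 (volume : Measure ℝ) :=
      (memLp_indicator_iff_restrict measurableSet_Ioi).2 hf'
    have hkey : ∀ t : ℝ, 0 ≤ t → ∀ x : ℝ, 0 < x → f' (x + t) = g (x + t) := by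
      intro t ht x hx
      rw [hgdef, Set.indicator_of_mem (by simp only [Set.mem_Ioi]; linarith)]
    have hA := hls_translation_tendsto hg t₀
    have hB := hls_mult_tendsto α hα hgsm hg t₀ ht₀
    have hle : ∀ᶠ t in 𝓝[Set.Ici 0] t₀,
        eLpNorm (fun x => halfLineSemigroup α t f' x - halfLineSemigroup α t₀ f' x) 2 μI ≤
          eLpNorm (fun x => g (x + t) - g (x + t₀)) 2 (volume : Measure ℝ) +
          eLpNorm (fun x : ℝ =>
            ((x:ℂ)^α * ((x+t:ℝ):ℂ)^(-α) - (x:ℂ)^α * ((x+t₀:ℝ):ℂ)^(-α)) * g (x+t₀)) 2 μI := by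
      filter_upwards [self_mem_nhdsWithin] with t ht
      have hsplit : (fun x => halfLineSemigroup α t f' x - halfLineSemigroup α t₀ f' x)
          =ᵐ[μI] (fun x : ℝ => (x:ℂ)^α * ((x+t:ℝ):ℂ)^(-α) * (g (x+t) - g (x+t₀)) +
            ((x:ℂ)^α * ((x+t:ℝ):ℂ)^(-α) - (x:ℂ)^α * ((x+t₀:ℝ):ℂ)^(-α)) * g (x+t₀)) := by
        refine (ae_restrict_iff' measurableSet_Ioi).2
          (Filter.Eventually.of_forall fun x hx => ?_)
        simp only [Set.mem_Ioi] at hx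
        simp only [halfLineSemigroup]
        rw [← hkey t ht x hx, ← hkey t₀ ht₀ x hx]
        ring
      rw [eLpNorm_congr_ae hsplit]
      have hc1 : ContinuousOn (fun x : ℝ => (x : ℂ) ^ α) (Set.Ioi 0) := fun x hx =>
        (ContinuousAt.cpow (by fun_prop) continuousAt_const
          (Complex.ofReal_mem_slitPlane.2 hx)).continuousWithinAt
      have hmaesm : ∀ s : ℝ, 0 ≤ s →
          AEStronglyMeasurable (fun x : ℝ => (x:ℂ)^α * ((x+s:ℝ):ℂ)^(-α)) μI := by
        intro s hs
        exact (((hls_measurable_cpow_const α).comp Complex.measurable_ofReal).mul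
          ((hls_measurable_cpow_const (-α)).comp
            (Complex.measurable_ofReal.comp (measurable_add_const s)))).aestronglyMeasurable
      have hgsh : ∀ s : ℝ, AEStronglyMeasurable (fun x : ℝ => g (x + s)) μI := fun s =>
        (hgsm.measurable.comp (measurable_add_const s)).aestronglyMeasurable
      refine le_trans (eLpNorm_add_le
        ((hmaesm t ht).mul ((hgsh t).sub (hgsh t₀)))
        (((hmaesm t ht).sub (hmaesm t₀ ht₀)).mul (hgsh t₀)) one_le_two) ?_
      refine add_le_add ?_ le_rfl
      have h1 : eLpNorm (fun x : ℝ => (x:ℂ)^α * ((x+t:ℝ):ℂ)^(-α) * (g (x+t) - g (x+t₀))) 2 μI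
          ≤ eLpNorm (fun x : ℝ => g (x+t) - g (x+t₀)) 2 μI := by
        refine eLpNorm_mono_ae ((ae_restrict_iff' measurableSet_Ioi).2
          (Filter.Eventually.of_forall fun x hx => ?_))
        simp only [Set.mem_Ioi] at hx
        rw [norm_mul]
        calc ‖(x:ℂ)^α * ((x+t:ℝ):ℂ)^(-α)‖ * ‖g (x+t) - g (x+t₀)‖
            ≤ 1 * ‖g (x+t) - g (x+t₀)‖ :=
              mul_le_mul_of_nonneg_right (hls_m_norm_le hα ht hx) (norm_nonneg _)
          _ = ‖g (x+t) - g (x+t₀)‖ := one_mul _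
      exact h1.trans (eLpNorm_mono_measure _ Measure.restrict_le_self)
    have hAB : Filter.Tendsto (fun t : ℝ =>
        eLpNorm (fun x => g (x + t) - g (x + t₀)) 2 (volume : Measure ℝ) +
        eLpNorm (fun x : ℝ =>
          ((x:ℂ)^α * ((x+t:ℝ):ℂ)^(-α) - (x:ℂ)^α * ((x+t₀:ℝ):ℂ)^(-α)) * g (x+t₀)) 2 μI)
        (𝓝[Set.Ici 0] t₀) (𝓝 0) := by
      have := (hA.mono_left nhdsWithin_le_nhds).add hB
      simpa using this
    exact tendsto_of_tendsto_of_tendsto_of_le_of_le' tendsto_const_nhds hAB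
      (Filter.Eventually.of_forall fun t => zero_le) hle
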